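/- arXiv:1301.6321 — 2 statements merged into one kernel-verified Lean document; each statement's English description precedes it below -/
import Mathlib

section
/- For every T > 0 and every y₀ ∈ H, under hypothesis (EC) the minimal norm problem (NOCP)_T has an optimal control: there exists v* ∈ V_T with ‖v*‖_{L∞((0,T);H)} = M_T. -/
open MeasureTheory Set Filter Topology

noncomputable section

variable {H : Type*} [NormedAddCommGroup H] [InnerProductSpace ℂ H] [CompleteSpace H]
  [SecondCountableTopology H]

/-- `U` is a strongly continuous one-parameter group of unitary operators on `H`,
abstracting the Schrödinger group `e^{-iΔt}`. -/
def IsUnitaryGroup (U : ℝ → H →L[ℂ] H) : Prop :=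
  U 0 = ContinuousLinearMap.id ℂ H ∧
  (∀ s t : ℝ, U (s + t) = (U s).comp (U t)) ∧
  (∀ (t : ℝ) (x : H), ‖U t x‖ = ‖x‖) ∧
  ∀ x : H, Continuous fun t : ℝ => U t x

/-- `B` is a nonzero orthogonal projection on `H`, abstracting multiplication by `χ_ω`. -/
def IsOrthProj (B : H →L[ℂ] H) : Prop :=
  B ≠ 0 ∧ B.comp B = B ∧ ∀ x y : H, (inner ℂ (B x) y : ℂ) = inner ℂ x (B y)

/-- Membership in `L∞((a,b);H)`. -/
def MemLinfty (u : ℝ → H) (a b : ℝ) : Prop :=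
  AEStronglyMeasurable u (volume : Measure ℝ) ∧
    ∃ c : ℝ, ∀ᵐ t : ℝ ∂volume, t ∈ Ioo a b → ‖u t‖ ≤ c

/-- Membership in `L∞((0,∞);H)`. -/
def MemLinftyInf (u : ℝ → H) : Prop :=
  AEStronglyMeasurable u (volume : Measure ℝ) ∧
    ∃ c : ℝ, ∀ᵐ t : ℝ ∂volume, t ∈ Ioi (0 : ℝ) → ‖u t‖ ≤ c

/-- The `L∞((a,b);H)` norm of `u`. -/
def supNorm (u : ℝ → H) (a b : ℝ) : ℝ :=
  sInf {c : ℝ | 0 ≤ c ∧ ∀ᵐ t : ℝ ∂volume, t ∈ Ioo a b → ‖u t‖ ≤ c}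

/-- `stateT U B T τ u y₀ = y(T; χ_{(τ,T)}u, y₀)`, the mild solution at time `T` of the
controlled Schrödinger equation with initial state `y₀`, the control acting on `(τ,T)`:
`y(T) = U(T)y₀ + ∫_τ^T U(T-s) B u(s) ds`.  The free state at time `t` starting from `y₀`
with control `u` active from time `0` is `stateT U B t 0 u y₀`. -/
def stateT (U : ℝ → H →L[ℂ] H) (B : H →L[ℂ] H) (T τ : ℝ) (u : ℝ → H) (y₀ : H) : H :=
  U T y₀ + ∫ s in Ioo τ T, U (T - s) (B (u s))

/-- Hypothesis (EC): `L∞`-exact controllability with cost. -/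
def EC (U : ℝ → H →L[ℂ] H) (B : H →L[ℂ] H) : Prop :=
  ∀ τ : ℝ, 0 < τ → ∃ C : ℝ, 0 < C ∧ ∀ y₀ z : H, ∃ u : ℝ → H,
    AEStronglyMeasurable u (volume : Measure ℝ) ∧
    (∀ᵐ t : ℝ ∂volume, t ∈ Ioo 0 τ → ‖u t‖ ≤ C * ‖z - U τ y₀‖) ∧
    stateT U B τ 0 u y₀ = z

/-- Hypothesis (UC): unique continuation. -/
def UC (U : ℝ → H →L[ℂ] H) (B : H →L[ℂ] H) : Prop :=
  ∀ η : H, η ≠ 0 → volume {t : ℝ | B (U t η) = 0} = 0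

/-- The admissible set `U_M` of the minimal time problem `(TOCP)_M`. -/
def UMset (U : ℝ → H →L[ℂ] H) (B : H →L[ℂ] H) (y₀ : H) (M : ℝ) : Set (ℝ → H) :=
  {u | MemLinftyInf u ∧ (∀ᵐ t : ℝ ∂volume, t ∈ Ioi (0 : ℝ) → ‖u t‖ ≤ M) ∧
    ∃ s : ℝ, 0 < s ∧ stateT U B s 0 u y₀ = 0}

/-- The minimal time `T_M` of `(TOCP)_M`. -/
def Tmin (U : ℝ → H →L[ℂ] H) (B : H →L[ℂ] H) (y₀ : H) (M : ℝ) : ℝ :=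
  sInf {s : ℝ | 0 < s ∧ ∃ u ∈ UMset U B y₀ M, stateT U B s 0 u y₀ = 0}

/-- The admissible set `V_T` of the minimal norm problem `(NOCP)_T`. -/
def VTset (U : ℝ → H →L[ℂ] H) (B : H →L[ℂ] H) (y₀ : H) (T : ℝ) : Set (ℝ → H) :=
  {v | MemLinfty v 0 T ∧ stateT U B T 0 v y₀ = 0}

/-- The minimal norm `M_T` of `(NOCP)_T`. -/
def Mmin (U : ℝ → H →L[ℂ] H) (B : H →L[ℂ] H) (y₀ : H) (T : ℝ) : ℝ :=
  sInf ((fun v : ℝ → H => supNorm v 0 T) '' VTset U B y₀ T)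

/-- Hypothesis (BB): bang-bang property of the minimal time problems. -/
def BB (U : ℝ → H →L[ℂ] H) (B : H →L[ℂ] H) : Prop :=
  ∀ y₀ : H, y₀ ≠ 0 → ∀ M : ℝ, 0 < M → ∀ u ∈ UMset U B y₀ M,
    stateT U B (Tmin U B y₀ M) 0 u y₀ = 0 →
    ∀ᵐ t : ℝ ∂volume, t ∈ Ioo 0 (Tmin U B y₀ M) → ‖u t‖ = M

/-- Hypothesis (ET): existence of optimal controls for the minimal time problems. -/
def ET (U : ℝ → H →L[ℂ] H) (B : H →L[ℂ] H) : Prop :=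
  ∀ y₀ : H, y₀ ≠ 0 → ∀ M : ℝ, 0 < M →
    ∃ u ∈ UMset U B y₀ M, stateT U B (Tmin U B y₀ M) 0 u y₀ = 0

/-- The admissible set `U_{M,τ}`. -/
def UadmSet (M τ T : ℝ) : Set (ℝ → H) :=
  {u | MemLinfty u 0 T ∧ ∀ᵐ t : ℝ ∂volume, t ∈ Ioo τ T → ‖u t‖ ≤ M}

/-- The optimal distance `r(M,τ)` of the optimal target problem `(OP)^{M,τ}`. -/
def rOP (U : ℝ → H →L[ℂ] H) (B : H →L[ℂ] H) (y₀ z_d : H) (T M τ : ℝ) : ℝ :=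
  sInf ((fun u : ℝ → H => ‖stateT U B T τ u y₀ - z_d‖) '' UadmSet M τ T)

/-- `u` is an optimal control to `(OP)^{M,τ}`. -/
def IsOptOP (U : ℝ → H →L[ℂ] H) (B : H →L[ℂ] H) (y₀ z_d : H) (T M τ : ℝ) (u : ℝ → H) :
    Prop :=
  u ∈ UadmSet M τ T ∧ ‖stateT U B T τ u y₀ - z_d‖ = rOP U B y₀ z_d T M τ

/-- `M^τ`, the minimal norm for exact steering to the target `z_d`. -/
def Mtau (U : ℝ → H →L[ℂ] H) (B : H →L[ℂ] H) (y₀ z_d : H) (T τ : ℝ) : ℝ :=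
  sInf ((fun u : ℝ → H => supNorm u τ T) ''
    {u : ℝ → H | MemLinfty u 0 T ∧ stateT U B T τ u y₀ = z_d})

/-- The admissible set `W_{τ,r}` of the optimal norm problem `(NP)^{τ,r}`. -/
def WadmSet (U : ℝ → H →L[ℂ] H) (B : H →L[ℂ] H) (y₀ z_d : H) (T τ r : ℝ) :
    Set (ℝ → H) :=
  {u | MemLinfty u 0 T ∧ ‖stateT U B T τ u y₀ - z_d‖ ≤ r}

/-- The optimal norm `M(τ,r)` of `(NP)^{τ,r}`. -/
def MNP (U : ℝ → H →L[ℂ] H) (B : H →L[ℂ] H) (y₀ z_d : H) (T τ r : ℝ) : ℝ :=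
  sInf ((fun u : ℝ → H => supNorm u τ T) '' WadmSet U B y₀ z_d T τ r)

/-- `u` is an optimal control to `(NP)^{τ,r}`. -/
def IsOptNP (U : ℝ → H →L[ℂ] H) (B : H →L[ℂ] H) (y₀ z_d : H) (T τ r : ℝ) (u : ℝ → H) :
    Prop :=
  u ∈ WadmSet U B y₀ z_d T τ r ∧ supNorm u τ T = MNP U B y₀ z_d T τ r

/-- The admissible set `V_{M,r}` of the second type optimal time problem `(TP)^{M,r}`. -/
def VadmSet (U : ℝ → H →L[ℂ] H) (B : H →L[ℂ] H) (y₀ z_d : H) (T M r : ℝ) :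
    Set (ℝ → H) :=
  {u | ∃ τ : ℝ, τ ∈ Ico (0 : ℝ) T ∧ u ∈ UadmSet M τ T ∧
    ‖stateT U B T τ u y₀ - z_d‖ ≤ r}

/-- `τ_{M,r}(u)`. -/
def tauOf (U : ℝ → H →L[ℂ] H) (B : H →L[ℂ] H) (y₀ z_d : H) (T r : ℝ) (u : ℝ → H) : ℝ :=
  sSup {τ : ℝ | τ ∈ Ico (0 : ℝ) T ∧ ‖stateT U B T τ u y₀ - z_d‖ ≤ r}

/-- The optimal time `τ(M,r)` of `(TP)^{M,r}`. -/
def tauTP (U : ℝ → H →L[ℂ] H) (B : H →L[ℂ] H) (y₀ z_d : H) (T M r : ℝ) : ℝ :=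
  sSup (tauOf U B y₀ z_d T r '' VadmSet U B y₀ z_d T M r)

/-- `u` is an optimal control to `(TP)^{M,r}`. -/
def IsOptTP (U : ℝ → H →L[ℂ] H) (B : H →L[ℂ] H) (y₀ z_d : H) (T M r : ℝ) (u : ℝ → H) :
    Prop :=
  u ∈ VadmSet U B y₀ z_d T M r ∧
    ‖stateT U B T (tauTP U B y₀ z_d T M r) u y₀ - z_d‖ ≤ r

/-- The adjoint state `φ*(t) = U(t-T)(z_d - y(T; χ_{(τ,T)}u, y₀))`. -/
def adjState (U : ℝ → H →L[ℂ] H) (B : H →L[ℂ] H) (y₀ z_d : H) (T τ : ℝ) (u : ℝ → H)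
    (t : ℝ) : H :=
  U (t - T) (z_d - stateT U B T τ u y₀)

set_option linter.unusedSectionVars false
open scoped ENNReal NNReal
section

lemma IsUnitaryGroup.continuous2 {U : ℝ → H →L[ℂ] H} (hU : IsUnitaryGroup U) :
    Continuous fun p : ℝ × H => U p.1 p.2 := by
  obtain ⟨h0, hadd, hnorm, hcont⟩ := hU
  rw [continuous_iff_continuousAt]
  rintro ⟨t₀, x₀⟩
  have key : ∀ p : ℝ × H, ‖U p.1 p.2 - U t₀ x₀‖ ≤ ‖p.2 - x₀‖ + ‖U p.1 x₀ - U t₀ x₀‖ := by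
    rintro ⟨t, x⟩
    have h1 : U t x - U t₀ x₀ = U t (x - x₀) + (U t x₀ - U t₀ x₀) := by
      rw [map_sub]; abel
    rw [h1]
    exact (norm_add_le _ _).trans (by rw [hnorm])
  have hg : Tendsto (fun p : ℝ × H => ‖p.2 - x₀‖ + ‖U p.1 x₀ - U t₀ x₀‖)
      (𝓝 (t₀, x₀)) (𝓝 0) := by
    have hc : Continuous fun p : ℝ × H => ‖p.2 - x₀‖ + ‖U p.1 x₀ - U t₀ x₀‖ := by
      fun_prop
    have := hc.tendsto (t₀, x₀)
    simpa using this
  rw [ContinuousAt, tendsto_iff_norm_sub_tendsto_zero]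
  exact squeeze_zero (fun p => norm_nonneg _) key hg

lemma aux_aesm {U : ℝ → H →L[ℂ] H} (hU : IsUnitaryGroup U) (B : H →L[ℂ] H) (T : ℝ)
    {μ : Measure ℝ} {f : ℝ → H} (hf : AEStronglyMeasurable f μ) :
    AEStronglyMeasurable (fun s => U (T - s) (B (f s))) μ := by
  have h1 : AEStronglyMeasurable (fun s => ((T - s, B (f s)) : ℝ × H)) μ :=
    ((continuous_const.sub continuous_id).aestronglyMeasurable).prodMk
      (B.continuous.comp_aestronglyMeasurable hf)
  exact hU.continuous2.comp_aestronglyMeasurable h1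

lemma aux_integrable2 {U : ℝ → H →L[ℂ] H} (hU : IsUnitaryGroup U) (B : H →L[ℂ] H) (T : ℝ)
    {μ : Measure ℝ} [IsFiniteMeasure μ] {f : ℝ → H} (hf : MemLp f 2 μ) :
    Integrable (fun s => U (T - s) (B (f s))) μ := by
  have hf1 : Integrable f μ := memLp_one_iff_integrable.mp
    (hf.mono_exponent one_le_two)
  refine Integrable.mono' (hf1.norm.const_mul ‖B‖) (aux_aesm hU B T hf.aestronglyMeasurable) ?_
  filter_upwards with s
  rw [hU.2.2.1]
  exact B.le_opNorm _

lemma supNorm_nonneg (u : ℝ → H) (a b : ℝ) : 0 ≤ supNorm u a b :=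
  Real.sInf_nonneg fun _ hx => hx.1

lemma supNorm_le {u : ℝ → H} {a b c : ℝ} (hc : 0 ≤ c)
    (h : ∀ᵐ t : ℝ ∂volume, t ∈ Ioo a b → ‖u t‖ ≤ c) : supNorm u a b ≤ c :=
  csInf_le ⟨0, fun _ hx => hx.1⟩ ⟨hc, h⟩

lemma ae_le_supNorm {u : ℝ → H} {a b c : ℝ}
    (h : ∀ᵐ t : ℝ ∂volume, t ∈ Ioo a b → ‖u t‖ ≤ c) :
    ∀ᵐ t : ℝ ∂volume, t ∈ Ioo a b → ‖u t‖ ≤ supNorm u a b := by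
  set S := {c : ℝ | 0 ≤ c ∧ ∀ᵐ t : ℝ ∂volume, t ∈ Ioo a b → ‖u t‖ ≤ c} with hS
  have hne : S.Nonempty := ⟨max c 0, le_max_right _ _,
    by filter_upwards [h] with t ht hmem; exact (ht hmem).trans (le_max_left _ _)⟩
  have key : ∀ n : ℕ, ∀ᵐ t : ℝ ∂volume, t ∈ Ioo a b → ‖u t‖ ≤ sInf S + 1 / (n + 1) := by
    intro n
    obtain ⟨x, hxS, hxlt⟩ := Real.lt_sInf_add_pos hne
      (by positivity : (0:ℝ) < 1 / (n + 1))
    filter_upwards [hxS.2] with t ht hmem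
    exact (ht hmem).trans hxlt.le
  rw [← ae_all_iff] at key
  filter_upwards [key] with t ht hmem
  refine le_of_forall_pos_le_add fun ε hε => ?_
  obtain ⟨n, hn⟩ := exists_nat_one_div_lt hε
  have hrfl : supNorm u a b = sInf S := rfl
  rw [hrfl]
  exact (ht n hmem).trans (by linarith)

lemma aux_L1_le {μ : Measure ℝ} [IsFiniteMeasure μ] (f : Lp H 2 μ) :
    ∫ s, ‖f s‖ ∂μ ≤ (μ univ ^ (2:ℝ)⁻¹).toReal * ‖f‖ := by
  have hasm := Lp.aestronglyMeasurable f
  have h1 : eLpNorm (⇑f) 1 μ ≤ eLpNorm (⇑f) 2 μ * μ univ ^ (1 / (1:ℝ≥0∞).toReal - 1 / (2:ℝ≥0∞).toReal) :=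
    eLpNorm_le_eLpNorm_mul_rpow_measure_univ one_le_two hasm
  have hexp : 1 / (1:ℝ≥0∞).toReal - 1 / (2:ℝ≥0∞).toReal = (2:ℝ)⁻¹ := by norm_num
  rw [hexp] at h1
  have h2 : ∫ s, ‖f s‖ ∂μ = (eLpNorm (⇑f) 1 μ).toReal := by
    rw [integral_norm_eq_lintegral_enorm hasm, eLpNorm_one_eq_lintegral_enorm]
  rw [h2, Lp.norm_def]
  have hfin : eLpNorm (⇑f) 2 μ * μ univ ^ (2:ℝ)⁻¹ ≠ ⊤ :=
    ENNReal.mul_ne_top (Lp.eLpNorm_ne_top f)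
      (ENNReal.rpow_ne_top_of_nonneg (by norm_num) (measure_ne_top μ _))
  calc (eLpNorm (⇑f) 1 μ).toReal ≤ (eLpNorm (⇑f) 2 μ * μ univ ^ (2:ℝ)⁻¹).toReal :=
        ENNReal.toReal_mono hfin h1
    _ = (μ univ ^ (2:ℝ)⁻¹).toReal * (eLpNorm (⇑f) 2 μ).toReal := by
        rw [ENNReal.toReal_mul]; ring


end

set_option maxHeartbeats 1000000 in
theorem nocp_has_optimal_control
    (U : ℝ → H →L[ℂ] H) (B : H →L[ℂ] H) (hU : IsUnitaryGroup U) (hB : IsOrthProj B)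
    (hEC : EC U B) (hECrev : EC (fun t => U (-t)) B)
    (y₀ : H) (T : ℝ) (hT : 0 < T) :
    ∃ v : ℝ → H, v ∈ VTset U B y₀ T ∧ supNorm v 0 T = Mmin U B y₀ T := by
  classical
  set μ : Measure ℝ := volume.restrict (Ioo 0 T) with hμ
  haveI : IsFiniteMeasure μ :=
    ⟨by rw [hμ, Measure.restrict_apply_univ, Real.volume_Ioo]; exact ENNReal.ofReal_lt_top⟩
  haveI : Fact ((1:ℝ≥0∞) ≤ 2) := ⟨one_le_two⟩
  set M : ℝ := Mmin U B y₀ T with hMdef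
  -- nonemptiness of VTset
  have hVne : (VTset U B y₀ T).Nonempty := by
    obtain ⟨C, hC, hC2⟩ := hEC T hT
    obtain ⟨u, hmeas, hbd, hsteer⟩ := hC2 y₀ 0
    exact ⟨u, ⟨hmeas, ⟨C * ‖0 - U T y₀‖, hbd⟩⟩, hsteer⟩
  have himgne : ((fun v : ℝ → H => supNorm v 0 T) '' VTset U B y₀ T).Nonempty :=
    hVne.image _
  have hbddb : BddBelow ((fun v : ℝ → H => supNorm v 0 T) '' VTset U B y₀ T) :=
    ⟨0, by rintro x ⟨v, _, rfl⟩; exact supNorm_nonneg v 0 T⟩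
  have hM0 : 0 ≤ M := Real.sInf_nonneg (by rintro x ⟨v, _, rfl⟩; exact supNorm_nonneg v 0 T)
  -- minimizing sequence
  have hseq : ∀ n : ℕ, ∃ v, v ∈ VTset U B y₀ T ∧ supNorm v 0 T < M + 1 / (n + 1) := by
    intro n
    obtain ⟨x, ⟨v, hv, rfl⟩, hlt⟩ := Real.lt_sInf_add_pos himgne
      (by positivity : (0:ℝ) < 1 / (n + 1))
    exact ⟨v, hv, hlt⟩
  choose v hvV hvlt using hseq
  set c : ℕ → ℝ := fun n => M + 1 / (n + 1) with hc
  have hc0 : ∀ n, 0 ≤ c n := fun n => by positivity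
  have hcmono : ∀ {n m : ℕ}, n ≤ m → c m ≤ c n := by
    intro n m h
    have : (1:ℝ) / (m + 1) ≤ 1 / (n + 1) := by
      apply one_div_le_one_div_of_le (by positivity)
      exact_mod_cast by omega
    simpa [hc] using this
  -- ae bounds wrt μ
  have hbd : ∀ n, ∀ᵐ s ∂μ, ‖v n s‖ ≤ c n := by
    intro n
    rw [hμ, ae_restrict_iff' measurableSet_Ioo]
    have h1 := ae_le_supNorm (u := v n) (a := 0) (b := T) (hvV n).1.2.choose_spec
    filter_upwards [h1] with t ht hmem
    exact (ht hmem).trans (hvlt n).le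
  have hmem2 : ∀ n, MemLp (v n) 2 μ := fun n =>
    MemLp.of_bound ((hvV n).1.1.restrict) _ (hbd n)
  -- the nested sets
  set S : ℕ → Set (Lp H 2 μ) := fun n =>
    {u | (∀ᵐ s ∂μ, ‖u s‖ ≤ c n) ∧ U T y₀ + ∫ s, U (T - s) (B (u s)) ∂μ = 0} with hSdef
  have hstate : ∀ (w : ℝ → H), stateT U B T 0 w y₀ = U T y₀ + ∫ s, U (T - s) (B (w s)) ∂μ := by
    intro w; rfl
  have hmemS : ∀ n, (hmem2 n).toLp (v n) ∈ S n := by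
    intro n
    constructor
    · filter_upwards [(hmem2 n).coeFn_toLp, hbd n] with s hs hbs
      rw [hs]; exact hbs
    · have h2 := (hvV n).2
      rw [hstate] at h2
      rw [← h2]
      congr 1
      apply integral_congr_ae
      filter_upwards [(hmem2 n).coeFn_toLp] with s hs
      rw [hs]
  have hconv : ∀ n, Convex ℝ (S n) := by
    intro n
    rintro u hu u' hu' a b ha hb hab
    have hcoe : ⇑(a • u + b • u') =ᵐ[μ] fun s => a • u s + b • u' s := by
      filter_upwards [Lp.coeFn_add (a • u) (b • u'), Lp.coeFn_smul a u, Lp.coeFn_smul b u']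
        with s h1 h2 h3
      rw [h1, Pi.add_apply, h2, h3, Pi.smul_apply, Pi.smul_apply]
    constructor
    · filter_upwards [hcoe, hu.1, hu'.1] with s hs h1 h2
      rw [hs]
      calc ‖a • u s + b • u' s‖ ≤ a * ‖u s‖ + b * ‖u' s‖ := by
            refine (norm_add_le _ _).trans ?_
            rw [norm_smul, norm_smul, Real.norm_eq_abs, Real.norm_eq_abs,
              abs_of_nonneg ha, abs_of_nonneg hb]
        _ ≤ a * c n + b * c n := by gcongr
        _ = c n := by rw [← add_mul, hab, one_mul]
    · have hint : ∫ s, U (T - s) (B ((a • u + b • u' : Lp H 2 μ) s)) ∂μ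
          = a • ∫ s, U (T - s) (B (u s)) ∂μ + b • ∫ s, U (T - s) (B (u' s)) ∂μ := by
        have hptwise : (fun s => U (T - s) (B ((a • u + b • u' : Lp H 2 μ) s)))
            =ᵐ[μ] fun s => a • U (T - s) (B (u s)) + b • U (T - s) (B (u' s)) := by
          filter_upwards [hcoe] with s hs
          rw [hs]
          simp only [map_add, ContinuousLinearMap.map_smul_of_tower]
        have hsm1 : Integrable (fun s => a • U (T - s) (B (u s))) μ :=
          (aux_integrable2 hU B T (Lp.memLp u)).smul a
        have hsm2 : Integrable (fun s => b • U (T - s) (B (u' s))) μ :=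
          (aux_integrable2 hU B T (Lp.memLp u')).smul b
        rw [integral_congr_ae hptwise, integral_add hsm1 hsm2, integral_smul, integral_smul]
      have h2 : ∫ s, U (T - s) (B (u s)) ∂μ = -(U T y₀) :=
        eq_neg_of_add_eq_zero_right hu.2
      have h2' : ∫ s, U (T - s) (B (u' s)) ∂μ = -(U T y₀) :=
        eq_neg_of_add_eq_zero_right hu'.2
      show U T y₀ + ∫ s, U (T - s) (B ((a • u + b • u' : Lp H 2 μ) s)) ∂μ = 0
      rw [hint, h2, h2', smul_neg, smul_neg, ← neg_add, ← add_smul, hab, one_smul,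
        add_neg_cancel]
  have hclosed : ∀ n, IsClosed (S n) := by
    intro n
    refine IsSeqClosed.isClosed ?_
    intro w p hwS hwp
    have hL1 : Tendsto (fun k => ∫ s, ‖(w k - p : Lp H 2 μ) s‖ ∂μ) atTop (𝓝 0) := by
      have hb2 : ∀ k, ∫ s, ‖(w k - p : Lp H 2 μ) s‖ ∂μ ≤ (μ univ ^ (2:ℝ)⁻¹).toReal * ‖w k - p‖ :=
        fun k => aux_L1_le (w k - p)
      have hnn : ∀ k, 0 ≤ ∫ s, ‖(w k - p : Lp H 2 μ) s‖ ∂μ :=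
        fun k => integral_nonneg fun s => norm_nonneg _
      have ht2 : Tendsto (fun k => (μ univ ^ (2:ℝ)⁻¹).toReal * ‖w k - p‖) atTop (𝓝 0) := by
        have h3 : Tendsto (fun k => ‖w k - p‖) atTop (𝓝 0) := by
          have := tendsto_iff_norm_sub_tendsto_zero.mp hwp
          simpa using this
        simpa using h3.const_mul (μ univ ^ (2:ℝ)⁻¹).toReal
      exact squeeze_zero hnn hb2 ht2
    have hint1 : Integrable (fun s => ‖p s‖) μ :=
      (memLp_one_iff_integrable.mp ((Lp.memLp p).mono_exponent one_le_two)).norm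
    constructor
    · -- the a.e. bound
      set g : ℝ → ℝ := fun s => max (‖p s‖ - c n) 0 with hg
      have hgint : Integrable g μ := by
        refine Integrable.mono' hint1 ?_ ?_
        · have hcont : Continuous fun x : ℝ => max (x - c n) 0 := by fun_prop
          exact hcont.comp_aestronglyMeasurable (Lp.aestronglyMeasurable p).norm
        · filter_upwards with s
          rw [Real.norm_eq_abs, abs_of_nonneg (le_max_right _ _)]
          exact max_le (by linarith [hc0 n]) (norm_nonneg _)
      have hkey : ∀ k, ∫ s, g s ∂μ ≤ ∫ s, ‖(w k - p : Lp H 2 μ) s‖ ∂μ := by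
        intro k
        have hsub : ⇑(w k - p) =ᵐ[μ] ⇑(w k) - ⇑p := Lp.coeFn_sub _ _
        have hint2 : Integrable (fun s => ‖(w k - p : Lp H 2 μ) s‖) μ :=
          (memLp_one_iff_integrable.mp
            ((Lp.memLp _).mono_exponent one_le_two)).norm
        refine integral_mono_ae hgint hint2 ?_
        filter_upwards [hsub, (hwS k).1] with s hs hbk
        rw [hs, Pi.sub_apply]
        refine max_le ?_ (norm_nonneg _)
        have h4 : ‖p s‖ - c n ≤ ‖p s‖ - ‖w k s‖ := by linarith
        refine h4.trans ?_
        rw [norm_sub_rev]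
        exact norm_sub_norm_le _ _
      have hgnn : 0 ≤ ∫ s, g s ∂μ := integral_nonneg fun s => le_max_right _ _
      have hgle : ∫ s, g s ∂μ ≤ 0 := ge_of_tendsto' hL1 hkey
      have hg0 : g =ᵐ[μ] 0 :=
        (integral_eq_zero_iff_of_nonneg_ae
          (Eventually.of_forall fun s => le_max_right _ _) hgint).mp
          (le_antisymm hgle hgnn)
      filter_upwards [hg0] with s hs
      have : max (‖p s‖ - c n) 0 = 0 := hs
      have h5 : ‖p s‖ - c n ≤ 0 := by
        by_contra h6
        push_neg at h6
        rw [max_eq_left h6.le] at this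
        linarith
      linarith
    · -- the constraint
      have hconst : ∀ k, ∫ s, U (T - s) (B (w k s)) ∂μ = -(U T y₀) :=
        fun k => eq_neg_of_add_eq_zero_right (hwS k).2
      have htend : Tendsto (fun k => ∫ s, U (T - s) (B (w k s)) ∂μ) atTop
          (𝓝 (∫ s, U (T - s) (B (p s)) ∂μ)) := by
        rw [tendsto_iff_norm_sub_tendsto_zero]
        refine squeeze_zero (fun k => norm_nonneg _) (fun k => ?_)
          (by simpa using hL1.const_mul ‖B‖)
        have hIk := aux_integrable2 hU B T (Lp.memLp (w k))
        have hIp := aux_integrable2 hU B T (Lp.memLp p)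
        rw [← integral_sub hIk hIp]
        have hsub : ⇑(w k - p) =ᵐ[μ] ⇑(w k) - ⇑p := Lp.coeFn_sub _ _
        have heq : (fun s => U (T - s) (B (w k s)) - U (T - s) (B (p s)))
            =ᵐ[μ] fun s => U (T - s) (B ((w k - p : Lp H 2 μ) s)) := by
          filter_upwards [hsub] with s hs
          rw [hs, Pi.sub_apply, map_sub, map_sub]
        rw [integral_congr_ae heq]
        calc ‖∫ s, U (T - s) (B ((w k - p : Lp H 2 μ) s)) ∂μ‖
            ≤ ∫ s, ‖B‖ * ‖(w k - p : Lp H 2 μ) s‖ ∂μ := by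
              refine norm_integral_le_of_norm_le
                (((memLp_one_iff_integrable.mp
                  ((Lp.memLp _).mono_exponent one_le_two)).norm).const_mul ‖B‖) ?_
              filter_upwards with s
              rw [hU.2.2.1]
              exact B.le_opNorm _
          _ = ‖B‖ * ∫ s, ‖(w k - p : Lp H 2 μ) s‖ ∂μ := integral_const_mul _ _
      have hlim : ∫ s, U (T - s) (B (p s)) ∂μ = -(U T y₀) := by
        simp only [hconst] at htend
        exact (tendsto_nhds_unique tendsto_const_nhds htend).symm
      show U T y₀ + ∫ s, U (T - s) (B (p s)) ∂μ = 0
      rw [hlim, add_neg_cancel]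
  have hanti : ∀ {n m : ℕ}, n ≤ m → S m ⊆ S n := by
    intro n m h u hu
    exact ⟨by filter_upwards [hu.1] with s hs; exact hs.trans (hcmono h), hu.2⟩
  have hSne : ∀ n, (S n).Nonempty := fun n => ⟨(hmem2 n).toLp (v n), hmemS n⟩
  set d : ℕ → ℝ := fun n => sInf ((fun u : Lp H 2 μ => ‖u‖) '' S n) with hd
  have hdbddb : ∀ n, BddBelow ((fun u : Lp H 2 μ => ‖u‖) '' S n) :=
    fun n => ⟨0, by rintro x ⟨u, _, rfl⟩; exact norm_nonneg u⟩
  have hd0 : ∀ n, 0 ≤ d n :=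
    fun n => Real.sInf_nonneg (by rintro x ⟨u, _, rfl⟩; exact norm_nonneg u)
  have hdmono : Monotone d := fun n m h =>
    csInf_le_csInf (hdbddb n) ((hSne m).image _) (image_mono (hanti h))
  have hdle : ∀ n (u : Lp H 2 μ), u ∈ S n → d n ≤ ‖u‖ :=
    fun n u hu => csInf_le (hdbddb n) ⟨u, hu, rfl⟩
  -- uniform bound
  set R₀ : ℝ := (measureUnivNNReal μ : ℝ) ^ (2 : ℝ≥0∞).toReal⁻¹ * (M + 1) with hR₀
  have hdR : ∀ n, d n ≤ R₀ := by
    intro n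
    refine (hdle n _ (hmemS n)).trans ?_
    have hbound : ∀ᵐ s ∂μ, ‖((hmem2 n).toLp (v n)) s‖ ≤ c n := by
      filter_upwards [(hmem2 n).coeFn_toLp, hbd n] with s hs hbs
      rw [hs]; exact hbs
    refine (Lp.norm_le_of_ae_bound (hc0 n) hbound).trans ?_
    rw [hR₀]
    have h7 : c n ≤ M + 1 := by
      have : (1:ℝ) / (n + 1) ≤ 1 := by
        rw [div_le_one (by positivity)]
        simp
      simp only [hc]; linarith
    gcongr
  have hbddA : BddAbove (range d) := ⟨R₀, by rintro x ⟨n, rfl⟩; exact hdR n⟩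
  set D : ℝ := ⨆ n, d n with hD
  have hdD : ∀ n, d n ≤ D := fun n => le_ciSup hbddA n
  have hdtend : Tendsto d atTop (𝓝 D) := tendsto_atTop_ciSup hdmono hbddA
  -- near-minimizers
  have hqex : ∀ n : ℕ, ∃ u, u ∈ S n ∧ ‖u‖ < d n + 1 / (n + 1) := by
    intro n
    obtain ⟨x, ⟨u, hu, rfl⟩, hlt⟩ := Real.lt_sInf_add_pos ((hSne n).image _)
      (by positivity : (0:ℝ) < 1 / (n + 1))
    exact ⟨u, hu, hlt⟩
  choose q hqS hqlt using hqex
  -- Cauchy sequence via parallelogram law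
  set b : ℕ → ℝ := fun N => Real.sqrt (4 * (D + 1 / (N + 1)) ^ 2 - 4 * d N ^ 2) with hbdef
  have hcauchy : CauchySeq q := by
    refine cauchySeq_of_le_tendsto_0 b (fun n m N hn hm => ?_) ?_
    · -- dist bound
      have hqn : q n ∈ S N := hanti hn (hqS n)
      have hqm : q m ∈ S N := hanti hm (hqS m)
      have hmid : (2⁻¹ : ℝ) • q n + (2⁻¹ : ℝ) • q m ∈ S N :=
        hconv N hqn hqm (by norm_num) (by norm_num) (by norm_num)
      have hmid2 : 2 * d N ≤ ‖q n + q m‖ := by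
        have h8 := hdle N _ hmid
        have h9 : (2⁻¹ : ℝ) • q n + (2⁻¹ : ℝ) • q m = (2⁻¹ : ℝ) • (q n + q m) := by
          rw [smul_add]
        rw [h9, norm_smul] at h8
        simp only [norm_inv, Real.norm_ofNat] at h8
        linarith
      have hpar := parallelogram_law_with_norm ℂ (q n) (q m)
      have hqnb : ‖q n‖ ≤ D + 1 / (N + 1) := by
        have := (hqlt n).le
        have h10 : d n ≤ D := hdD n
        have h11 : (1:ℝ) / (n + 1) ≤ 1 / (N + 1) := by
          apply one_div_le_one_div_of_le (by positivity)
          exact_mod_cast by omega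
        linarith
      have hqmb : ‖q m‖ ≤ D + 1 / (N + 1) := by
        have := (hqlt m).le
        have h10 : d m ≤ D := hdD m
        have h11 : (1:ℝ) / (m + 1) ≤ 1 / (N + 1) := by
          apply one_div_le_one_div_of_le (by positivity)
          exact_mod_cast by omega
        linarith
      rw [dist_eq_norm, ← Real.sqrt_sq (norm_nonneg (q n - q m))]
      apply Real.sqrt_le_sqrt
      have hdN0 := hd0 N
      nlinarith [norm_nonneg (q n + q m), norm_nonneg (q n), norm_nonneg (q m),
        norm_nonneg (q n - q m)]
    · -- b tends to 0
      have h4 : Tendsto (fun N : ℕ => D + 1 / (N + 1 : ℝ)) atTop (𝓝 D) := by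
        have := tendsto_one_div_add_atTop_nhds_zero_nat (𝕜 := ℝ)
        simpa using tendsto_const_nhds.add this
      have hinside : Tendsto (fun N : ℕ => 4 * (D + 1 / (N + 1 : ℝ)) ^ 2 - 4 * d N ^ 2)
          atTop (𝓝 0) := by
        have h5 : Tendsto (fun N : ℕ => 4 * (D + 1 / (N + 1 : ℝ)) ^ 2) atTop (𝓝 (4 * D ^ 2)) :=
          (h4.pow 2).const_mul 4
        have h6 : Tendsto (fun N : ℕ => 4 * d N ^ 2) atTop (𝓝 (4 * D ^ 2)) :=
          (hdtend.pow 2).const_mul 4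
        simpa using h5.sub h6
      have := (Real.continuous_sqrt.tendsto 0).comp hinside
      simpa [hbdef, Function.comp_def] using this
  obtain ⟨pl, hpl⟩ := cauchySeq_tendsto_of_complete hcauchy
  have hplS : ∀ N, pl ∈ S N := fun N =>
    (hclosed N).mem_of_tendsto hpl (eventually_atTop.2 ⟨N, fun n hn => hanti hn (hqS n)⟩)
  -- the limit has the right bound
  have hplb : ∀ᵐ s ∂μ, ‖pl s‖ ≤ M := by
    have hall := ae_all_iff.mpr fun n => (hplS n).1
    filter_upwards [hall] with s hs
    refine le_of_forall_pos_le_add fun ε hε => ?_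
    obtain ⟨n, hn⟩ := exists_nat_one_div_lt hε
    refine (hs n).trans ?_
    simp only [hc]
    linarith
  -- build the control as a function on ℝ
  set pf : ℝ → H := (Lp.aestronglyMeasurable pl).mk _ with hpfdef
  have hpfm : StronglyMeasurable pf := (Lp.aestronglyMeasurable pl).stronglyMeasurable_mk
  have hpfe : ⇑pl =ᵐ[μ] pf := (Lp.aestronglyMeasurable pl).ae_eq_mk
  set vstar : ℝ → H := (Ioo (0:ℝ) T).indicator pf with hvstardef
  have hv_eqμ : vstar =ᵐ[μ] ⇑pl := by
    have hmem3 : ∀ᵐ s ∂μ, s ∈ Ioo (0:ℝ) T := by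
      rw [hμ]; exact ae_restrict_mem measurableSet_Ioo
    filter_upwards [hpfe, hmem3] with s h1 h2
    rw [hvstardef]
    rw [indicator_of_mem h2, ← h1]
  have hv_meas : AEStronglyMeasurable vstar volume :=
    (hpfm.indicator measurableSet_Ioo).aestronglyMeasurable
  have hvbd : ∀ᵐ t ∂volume, t ∈ Ioo 0 T → ‖vstar t‖ ≤ M := by
    rw [← ae_restrict_iff' measurableSet_Ioo, ← hμ]
    filter_upwards [hv_eqμ, hplb] with s h1 h2
    rw [h1]; exact h2
  have hvVT : vstar ∈ VTset U B y₀ T := by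
    refine ⟨⟨hv_meas, M, hvbd⟩, ?_⟩
    rw [hstate]
    have hcongr : (fun s => U (T - s) (B (vstar s))) =ᵐ[μ] fun s => U (T - s) (B (pl s)) := by
      filter_upwards [hv_eqμ] with s hs
      rw [hs]
    rw [integral_congr_ae hcongr]
    have h12 : ∫ s, U (T - s) (B (pl s)) ∂μ = -(U T y₀) :=
      eq_neg_of_add_eq_zero_right (hplS 0).2
    rw [h12, add_neg_cancel]
  refine ⟨vstar, hvVT, le_antisymm (supNorm_le hM0 hvbd) ?_⟩
  exact csInf_le hbddb ⟨vstar, hvVT, rfl⟩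
end
end

section
/- Assume y₀ ≠ 0 and hypotheses (EC), (BB), (ET). Then the minimal time map M ↦ T_M from (0,∞) to (0,∞) is strictly monotonically decreasing and continuous, and satisfies lim_{M→0⁺} T_M = ∞ and lim_{M→∞} T_M = 0. -/
open MeasureTheory Set Filter Topology

noncomputable section

variable {H : Type*} [NormedAddCommGroup H] [InnerProductSpace ℂ H] [CompleteSpace H]
  [SecondCountableTopology H]

section Aux

variable {U : ℝ → H →L[ℂ] H} {B : H →L[ℂ] H}

lemma IsOrthProj.norm_le (hB : IsOrthProj B) (x : H) : ‖B x‖ ≤ ‖x‖ := by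
  by_cases h0 : B x = 0
  · simp [h0]
  have hBB : B (B x) = B x := by
    have := congrArg (fun T : H →L[ℂ] H => T x) hB.2.1
    simpa using this
  have h1 : (inner ℂ (B x) (B x) : ℂ) = inner ℂ x (B x) := by
    rw [hB.2.2 x (B x), hBB]
  have h2 : ‖B x‖ ^ 2 = ‖(inner ℂ (B x) (B x) : ℂ)‖ := by
    rw [@inner_self_eq_norm_sq_to_K ℂ]
    simp [pow_two]
  have h3 : ‖(inner ℂ x (B x) : ℂ)‖ ≤ ‖x‖ * ‖B x‖ := norm_inner_le_norm x (B x)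
  have h4 : ‖B x‖ ^ 2 ≤ ‖x‖ * ‖B x‖ := by rw [h2, h1]; exact h3
  have h5 : 0 < ‖B x‖ := norm_pos_iff.2 h0
  nlinarith

lemma contU (hU : IsUnitaryGroup U) : Continuous fun p : ℝ × H => U p.1 p.2 := by
  rw [continuous_iff_continuousAt]
  rintro ⟨t₀, x₀⟩
  have h1 : Tendsto (fun p : ℝ × H => U p.1 x₀) (𝓝 (t₀, x₀)) (𝓝 (U t₀ x₀)) :=
    ((hU.2.2.2 x₀).comp continuous_fst).continuousAt
  have h2 : Tendsto (fun p : ℝ × H => U p.1 (p.2 - x₀)) (𝓝 (t₀, x₀)) (𝓝 0) := by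
    apply squeeze_zero_norm (a := fun p : ℝ × H => ‖p.2 - x₀‖)
    · intro p; rw [hU.2.2.1]
    · have h : Tendsto (fun p : ℝ × H => p.2 - x₀) (𝓝 (t₀, x₀)) (𝓝 (x₀ - x₀)) :=
        (continuous_snd.sub continuous_const).continuousAt
      simpa using h.norm
  have h3 : Tendsto (fun p : ℝ × H => U p.1 (p.2 - x₀) + U p.1 x₀) (𝓝 (t₀, x₀))
      (𝓝 (U t₀ x₀)) := by simpa using h2.add h1
  have heq : (fun p : ℝ × H => U p.1 (p.2 - x₀) + U p.1 x₀) =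
      fun p : ℝ × H => U p.1 p.2 := by
    funext p; rw [map_sub]; abel
  rw [heq] at h3
  exact h3

lemma aesm_integrand (hU : IsUnitaryGroup U) (B : H →L[ℂ] H) {u : ℝ → H}
    (hu : AEStronglyMeasurable u (volume : Measure ℝ)) (T : ℝ) :
    AEStronglyMeasurable (fun r : ℝ => U (T - r) (B (u r))) (volume : Measure ℝ) := by
  have hc : Continuous fun p : ℝ × H => U (T - p.1) (B p.2) :=
    (contU hU).comp ((continuous_const.sub continuous_fst).prodMk
      (B.continuous.comp continuous_snd))
  exact hc.comp_aestronglyMeasurable (aestronglyMeasurable_id.prodMk hu)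

lemma integrableOn_integrand (hU : IsUnitaryGroup U) (hB : IsOrthProj B) {u : ℝ → H}
    (hu : AEStronglyMeasurable u (volume : Measure ℝ)) {c : ℝ} (hbd : ∀ t, ‖u t‖ ≤ c)
    (T a b : ℝ) :
    IntegrableOn (fun r : ℝ => U (T - r) (B (u r))) (Ioo a b) volume := by
  apply Integrable.mono' (g := fun _ => c)
    (integrableOn_const measure_Ioo_lt_top.ne)
  · exact (aesm_integrand hU B hu T).restrict
  · apply ae_of_all
    intro t
    rw [hU.2.2.1]
    exact (hB.norm_le _).trans (hbd t)

/-- A "good" control: everywhere bounded, supported in `(0,s)`, steering `y` to `z`. -/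
def GoodCtrl (U : ℝ → H →L[ℂ] H) (B : H →L[ℂ] H) (s M : ℝ) (u : ℝ → H) (y z : H) :
    Prop :=
  AEStronglyMeasurable u (volume : Measure ℝ) ∧ (∀ t, ‖u t‖ ≤ M) ∧
    (∀ t, t ∉ Ioo 0 s → u t = 0) ∧ stateT U B s 0 u y = z

lemma GoodCtrl.mono {s M M' : ℝ} {u : ℝ → H} {y z : H}
    (h : GoodCtrl U B s M u y z) (hMM : M ≤ M') : GoodCtrl U B s M' u y z :=
  ⟨h.1, fun t => (h.2.1 t).trans hMM, h.2.2.1, h.2.2.2⟩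

lemma trunc {u : ℝ → H} {s c : ℝ} {y z : H}
    (hu : AEStronglyMeasurable u (volume : Measure ℝ))
    (hbd : ∀ᵐ t : ℝ ∂volume, t ∈ Ioo 0 s → ‖u t‖ ≤ c) (hc : 0 ≤ c)
    (hst : stateT U B s 0 u y = z) : ∃ u', GoodCtrl U B s c u' y z := by
  obtain ⟨g, hg, hug⟩ := hu
  set A : Set ℝ := Ioo 0 s ∩ {t | ‖g t‖ ≤ c} with hAdef
  have hA : MeasurableSet A :=
    measurableSet_Ioo.inter (hg.norm.measurable measurableSet_Iic)
  refine ⟨A.indicator g, (hg.indicator hA).aestronglyMeasurable, ?_, ?_, ?_⟩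
  · intro t
    by_cases h : t ∈ A
    · rw [indicator_of_mem h]; exact h.2
    · rw [indicator_of_notMem h]; simpa using hc
  · intro t ht
    exact indicator_of_notMem (fun hA' => ht hA'.1) g
  · rw [← hst]
    unfold stateT
    congr 1
    apply setIntegral_congr_ae measurableSet_Ioo
    filter_upwards [hug, hbd] with t h1 h2 ht
    have hmem : t ∈ A := ⟨ht, by simp only [mem_setOf_eq, ← h1]; exact h2 ht⟩
    rw [indicator_of_mem hmem, ← h1]

lemma good_zero (s M : ℝ) (hM : 0 ≤ M) :
    GoodCtrl U B s M (fun _ => (0 : H)) 0 0 := by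
  refine ⟨aestronglyMeasurable_const, fun t => by simpa using hM, fun t _ => rfl, ?_⟩
  simp [stateT]

lemma good_concat (hU : IsUnitaryGroup U) (hB : IsOrthProj B) {s ε M : ℝ}
    {u w : ℝ → H} {y z z' : H} (hs : 0 < s) (hε : 0 < ε)
    (hu : GoodCtrl U B s M u y z) (hw : GoodCtrl U B ε M w z z') :
    GoodCtrl U B (s + ε) M (fun t => u t + w (t - s)) y z' := by
  obtain ⟨humeas, hubd, husupp, hust⟩ := hu
  obtain ⟨hwmeas, hwbd, hwsupp, hwst⟩ := hw
  have hwmeas' : AEStronglyMeasurable (fun t : ℝ => w (t - s)) (volume : Measure ℝ) := by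
    have := hwmeas.comp_measurePreserving (measurePreserving_add_right volume (-s))
    have h2 : (fun t : ℝ => w (t - s)) = w ∘ fun x => x + -s := by
      funext t; simp [sub_eq_add_neg]
    rw [h2]; exact this
  have hwbd' : ∀ t : ℝ, ‖w (t - s)‖ ≤ M := fun t => hwbd _
  refine ⟨humeas.add hwmeas', ?_, ?_, ?_⟩
  · intro t
    rcases le_or_gt t s with h | h
    · have hw0 : w (t - s) = 0 :=
        hwsupp _ (fun hmem => absurd hmem.1 (not_lt.2 (by linarith)))
      simpa [hw0] using hubd t
    · have hu0 : u t = 0 := husupp _ (fun hmem => absurd hmem.2 (not_lt.2 h.le))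
      simpa [hu0] using hwbd (t - s)
  · intro t ht
    simp only [mem_Ioo, not_and_or, not_lt] at ht
    show u t + w (t - s) = 0
    rcases ht with h | h
    · rw [husupp t (fun hmem => absurd hmem.1 (not_lt.2 h)),
        hwsupp (t - s) (fun hmem => absurd hmem.1 (not_lt.2 (by linarith)))]
      simp
    · rw [husupp t (fun hmem => absurd hmem.2 (not_lt.2 (by linarith))),
        hwsupp (t - s) (fun hmem => absurd hmem.2 (not_lt.2 (by linarith)))]
      simp
  · have hsum : (s : ℝ) ≤ s + ε := by linarith
    have hsplit : Ioo (0 : ℝ) (s + ε) = Ioo 0 s ∪ Ico s (s + ε) :=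
      (Ioo_union_Ico_eq_Ioo hs hsum).symm
    have hdisj : Disjoint (Ioo (0 : ℝ) s) (Ico s (s + ε)) := by
      rw [Set.disjoint_left]
      rintro x ⟨_, hx2⟩ ⟨hx3, _⟩
      exact absurd hx3 (not_le.2 hx2)
    have hint1 : IntegrableOn (fun r : ℝ => U (s + ε - r) (B (u r)))
        (Ioo 0 (s + ε)) volume := integrableOn_integrand hU hB humeas hubd _ _ _
    have hint2 : IntegrableOn (fun r : ℝ => U (s + ε - r) (B (w (r - s))))
        (Ioo 0 (s + ε)) volume := integrableOn_integrand hU hB hwmeas' hwbd' _ _ _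
    have e2 : ∫ r in Ioo 0 (s + ε), U (s + ε - r) (B (u r)) = U ε (z - U s y) := by
      rw [hsplit, setIntegral_union hdisj measurableSet_Ico
        (hint1.mono_set (by rw [hsplit]; exact subset_union_left))
        (hint1.mono_set (by rw [hsplit]; exact subset_union_right))]
      have hz : ∫ r in Ico s (s + ε), U (s + ε - r) (B (u r)) = 0 := by
        rw [setIntegral_congr_fun measurableSet_Ico
          (g := fun _ : ℝ => (0 : H)) (fun r hr => by
            rw [husupp r (fun hmem => absurd hmem.2 (not_lt.2 hr.1))]; simp)]
        simp
      rw [hz, add_zero]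
      rw [setIntegral_congr_fun measurableSet_Ioo
        (g := fun r : ℝ => U ε (U (s - r) (B (u r)))) (fun r _ => by
          have h : s + ε - r = ε + (s - r) := by ring
          rw [h, hU.2.1]; rfl)]
      rw [ContinuousLinearMap.integral_comp_comm (U ε)
        (integrableOn_integrand hU hB humeas hubd s 0 s)]
      congr 1
      have h := hust
      unfold stateT at h
      rw [eq_sub_iff_add_eq, add_comm]
      exact h
    have e3 : ∫ r in Ioo 0 (s + ε), U (s + ε - r) (B (w (r - s))) = z' - U ε z := by
      rw [hsplit, setIntegral_union hdisj measurableSet_Ico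
        (hint2.mono_set (by rw [hsplit]; exact subset_union_left))
        (hint2.mono_set (by rw [hsplit]; exact subset_union_right))]
      have hz : ∫ r in Ioo 0 s, U (s + ε - r) (B (w (r - s))) = 0 := by
        rw [setIntegral_congr_fun measurableSet_Ioo
          (g := fun _ : ℝ => (0 : H)) (fun r hr => by
            rw [hwsupp (r - s) (fun hmem => absurd hmem.1 (not_lt.2 (by
              have := hr.2; linarith)))]; simp)]
        simp
      rw [hz, zero_add]
      have htrans : ∫ r in Ico s (s + ε), U (s + ε - r) (B (w (r - s)))
          = ∫ r in Ico 0 ε, U (s + ε - (r + s)) (B (w (r + s - s))) := by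
        rw [← integral_indicator measurableSet_Ico, ← integral_indicator measurableSet_Ico]
        rw [← (measurePreserving_add_right volume s).integral_comp
          (measurableEmbedding_addRight s)
          ((Ico s (s + ε)).indicator (fun r : ℝ => U (s + ε - r) (B (w (r - s)))))]
        congr 1
        funext r
        by_cases h : r ∈ Ico (0 : ℝ) ε
        · rw [indicator_of_mem h, indicator_of_mem
            (show r + s ∈ Ico s (s + ε) from ⟨by linarith [h.1], by linarith [h.2]⟩)]
        · rw [indicator_of_notMem h, indicator_of_notMem (fun hh : r + s ∈ Ico s (s + ε) =>
            h ⟨by linarith [hh.1], by linarith [hh.2]⟩)]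
      rw [htrans]
      rw [setIntegral_congr_fun measurableSet_Ico
        (g := fun r : ℝ => U (ε - r) (B (w r))) (fun r _ => by
          have h1 : s + ε - (r + s) = ε - r := by ring
          have h2 : r + s - s = r := by ring
          rw [h1, h2])]
      rw [integral_Ico_eq_integral_Ioo]
      have h := hwst
      unfold stateT at h
      rw [eq_sub_iff_add_eq, add_comm]
      exact h
    show stateT U B (s + ε) 0 (fun t => u t + w (t - s)) y = z'
    unfold stateT
    have hintegrand : (fun r : ℝ => U (s + ε - r) (B ((fun t => u t + w (t - s)) r)))
        = fun r : ℝ => U (s + ε - r) (B (u r)) + U (s + ε - r) (B (w (r - s))) := by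
      funext r
      simp only [map_add]
    rw [hintegrand, integral_add hint1 hint2, e2, e3]
    have hgrp : U (s + ε) y = U ε (U s y) := by
      rw [show s + ε = ε + s from by ring, hU.2.1]; rfl
    rw [hgrp, map_sub]
    abel

lemma good_scale {s M : ℝ} {u : ℝ → H} {y : H}
    (hgood : GoodCtrl U B s M u y 0) {c : ℝ} (hc0 : 0 ≤ c) :
    GoodCtrl U B s (c * M) (fun t => c • u t) y ((1 - c) • U s y) := by
  obtain ⟨hm, hb, hsupp, hst⟩ := hgood
  refine ⟨hm.const_smul c, ?_, ?_, ?_⟩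
  · intro t
    show ‖c • u t‖ ≤ c * M
    rw [norm_smul, Real.norm_eq_abs, abs_of_nonneg hc0]
    exact mul_le_mul_of_nonneg_left (hb t) hc0
  · intro t ht; show c • u t = 0; rw [hsupp t ht, smul_zero]
  · unfold stateT
    have hptw : (fun r : ℝ => U (s - r) (B ((fun t => c • u t) r)))
        = fun r : ℝ => c • U (s - r) (B (u r)) := by
      funext r
      rw [B.map_smul_of_tower, (U (s - r)).map_smul_of_tower]
    rw [hptw, integral_smul]
    have hi : ∫ r in Ioo 0 s, U (s - r) (B (u r)) = -(U s y) := by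
      have h := hst
      unfold stateT at h
      exact eq_neg_of_add_eq_zero_right h
    rw [hi, smul_neg, sub_smul, one_smul]
    abel

lemma ec_good (hEC : EC U B) {τ : ℝ} (hτ : 0 < τ) :
    ∃ C : ℝ, 0 < C ∧ ∀ y z : H, ∃ u, GoodCtrl U B τ (C * ‖z - U τ y‖) u y z := by
  obtain ⟨C, hC, h⟩ := hEC τ hτ
  refine ⟨C, hC, fun y z => ?_⟩
  obtain ⟨u, hm, hb, hst⟩ := h y z
  exact trunc hm hb (by positivity) hst

lemma reach (hU : IsUnitaryGroup U) (hB : IsOrthProj B) {τ C M : ℝ}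
    (hτ : 0 < τ) (hC : 0 < C) (hM : 0 < M)
    (hec : ∀ y z : H, ∃ u, GoodCtrl U B τ (C * ‖z - U τ y‖) u y z) :
    ∀ n : ℕ, ∀ y : H, ‖y‖ ≤ n * (M / C) → ∃ u, GoodCtrl U B ((n + 1) * τ) M u y 0 := by
  intro n
  induction n with
  | zero =>
    intro y hy
    have hy0 : y = 0 := by
      rw [← norm_le_zero_iff]
      simpa using hy
    subst hy0
    exact ⟨_, by simpa using good_zero ((((0 : ℕ) : ℝ) + 1) * τ) M hM.le⟩
  | succ n ih =>
    intro y hy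
    by_cases hcase : ‖y‖ ≤ M / C
    · obtain ⟨u, hu⟩ := hec y 0
      have hbd : C * ‖(0 : H) - U τ y‖ ≤ M := by
        rw [zero_sub, norm_neg, hU.2.2.1]
        calc C * ‖y‖ ≤ C * (M / C) := mul_le_mul_of_nonneg_left hcase hC.le
        _ = M := by field_simp
      have hu' : GoodCtrl U B τ M u y 0 := hu.mono hbd
      have hzpos : (0 : ℝ) < ((n : ℝ) + 1) * τ := by positivity
      have hcc := good_concat hU hB hτ hzpos hu'
        (good_zero (((n : ℝ) + 1) * τ) M hM.le)
      have heq : τ + ((n : ℝ) + 1) * τ = (((n + 1 : ℕ) : ℝ) + 1) * τ := by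
        push_cast; ring
      rw [heq] at hcc
      exact ⟨_, hcc⟩
    · push_neg at hcase
      have hy0 : 0 < ‖y‖ := lt_trans (by positivity) hcase
      set lam : ℝ := (M / C) / ‖y‖ with hlamdef
      have hlam0 : 0 < lam := by positivity
      have hlam1 : lam ≤ 1 := by
        rw [hlamdef, div_le_one hy0]
        exact hcase.le
      set z : H := (1 - lam) • U τ y with hzdef
      have hznorm : ‖z - U τ y‖ = M / C := by
        rw [hzdef, show (1 - lam) • U τ y - U τ y = (-lam) • U τ y from by
          rw [sub_smul, one_smul, neg_smul]; abel]
        rw [norm_smul, Real.norm_eq_abs, abs_neg, abs_of_pos hlam0, hU.2.2.1,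
          hlamdef, div_mul_cancel₀ _ hy0.ne']
      obtain ⟨u₁, hu₁⟩ := hec y z
      have hu₁' : GoodCtrl U B τ M u₁ y z := by
        have : C * ‖z - U τ y‖ = M := by
          rw [hznorm]; field_simp
        rwa [this] at hu₁
      have hznorm2 : ‖z‖ ≤ n * (M / C) := by
        have h1 : ‖z‖ = (1 - lam) * ‖y‖ := by
          rw [hzdef, norm_smul, Real.norm_eq_abs, abs_of_nonneg (by linarith), hU.2.2.1]
        have h2 : lam * ‖y‖ = M / C := by
          rw [hlamdef, div_mul_cancel₀ _ hy0.ne']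
        have h3 : ‖y‖ ≤ ((n : ℝ) + 1) * (M / C) := by
          have := hy; push_cast at this ⊢; linarith
        nlinarith
      obtain ⟨u₂, hu₂⟩ := ih z hznorm2
      have hzpos : (0 : ℝ) < ((n : ℝ) + 1) * τ := by positivity
      have hcc := good_concat hU hB hτ hzpos hu₁' hu₂
      have heq : τ + ((n : ℝ) + 1) * τ = (((n + 1 : ℕ) : ℝ) + 1) * τ := by
        push_cast; ring
      rw [heq] at hcc
      exact ⟨_, hcc⟩

variable (y₀ : H)

lemma mem_UMset_of_good {s M : ℝ} {u : ℝ → H} (hs : 0 < s)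
    (h : GoodCtrl U B s M u y₀ 0) : u ∈ UMset U B y₀ M :=
  ⟨⟨h.1, M, ae_of_all _ fun t _ => h.2.1 t⟩, ae_of_all _ fun t _ => h.2.1 t,
    s, hs, h.2.2.2⟩

lemma Tmin_le_of_good {s M : ℝ} {u : ℝ → H} (hs : 0 < s)
    (h : GoodCtrl U B s M u y₀ 0) : Tmin U B y₀ M ≤ s :=
  csInf_le ⟨0, fun _ hx => hx.1.le⟩
    ⟨hs, u, mem_UMset_of_good y₀ hs h, h.2.2.2⟩

lemma lb_of_mem (hU : IsUnitaryGroup U) (hB : IsOrthProj B) {M : ℝ} (hM : 0 < M)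
    {s : ℝ} (hmem : s ∈ {s : ℝ | 0 < s ∧ ∃ u ∈ UMset U B y₀ M,
      stateT U B s 0 u y₀ = 0}) : ‖y₀‖ / M ≤ s := by
  obtain ⟨hspos, u, ⟨_, haebd, _⟩, hst⟩ := hmem
  have hbd : ∀ᵐ t : ℝ ∂(volume.restrict (Ioo 0 s)), ‖U (s - t) (B (u t))‖ ≤ M := by
    filter_upwards [ae_restrict_of_ae haebd, ae_restrict_mem measurableSet_Ioo]
      with t h1 h2
    rw [hU.2.2.1]
    exact (hB.norm_le _).trans (h1 h2.1)
  have hle : ‖∫ t in Ioo 0 s, U (s - t) (B (u t))‖ ≤ ∫ _ in Ioo 0 s, M := by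
    exact norm_integral_le_of_norm_le (integrableOn_const measure_Ioo_lt_top.ne) hbd
  have hconst : ∫ _ in Ioo 0 s, M = s * M := by
    rw [setIntegral_const, measureReal_def, Real.volume_Ioo, smul_eq_mul, sub_zero,
      ENNReal.toReal_ofReal hspos.le]
  have hnorm : ‖y₀‖ ≤ s * M := by
    have h := hst
    unfold stateT at h
    have h2 : U s y₀ = -∫ t in Ioo 0 s, U (s - t) (B (u t)) :=
      eq_neg_of_add_eq_zero_left h
    calc ‖y₀‖ = ‖U s y₀‖ := (hU.2.2.1 s y₀).symm
    _ = ‖∫ t in Ioo 0 s, U (s - t) (B (u t))‖ := by rw [h2, norm_neg]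
    _ ≤ s * M := hle.trans (le_of_eq hconst)
  rw [div_le_iff₀ hM]
  linarith

lemma S_nonempty (hU : IsUnitaryGroup U) (hB : IsOrthProj B) (hEC : EC U B)
    {M : ℝ} (hM : 0 < M) :
    {s : ℝ | 0 < s ∧ ∃ u ∈ UMset U B y₀ M, stateT U B s 0 u y₀ = 0}.Nonempty := by
  obtain ⟨C, hC, hec⟩ := ec_good hEC one_pos
  obtain ⟨n, hn⟩ := exists_nat_ge (‖y₀‖ * (C / M))
  have hny : ‖y₀‖ ≤ n * (M / C) := by
    calc ‖y₀‖ = ‖y₀‖ * (C / M) * (M / C) := by field_simp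
    _ ≤ n * (M / C) := mul_le_mul_of_nonneg_right hn (by positivity)
  obtain ⟨u, hu⟩ := reach hU hB one_pos hC hM hec n y₀ hny
  have hpos : (0 : ℝ) < ((n : ℝ) + 1) * 1 := by positivity
  exact ⟨((n : ℝ) + 1) * 1, hpos, u, mem_UMset_of_good y₀ hpos hu, hu.2.2.2⟩

lemma Tmin_lb (hU : IsUnitaryGroup U) (hB : IsOrthProj B) (hEC : EC U B)
    {M : ℝ} (hM : 0 < M) : ‖y₀‖ / M ≤ Tmin U B y₀ M :=
  le_csInf (S_nonempty y₀ hU hB hEC hM) fun _ hs => lb_of_mem y₀ hU hB hM hs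

lemma Tmin_pos (hy₀ : y₀ ≠ 0) (hU : IsUnitaryGroup U) (hB : IsOrthProj B) (hEC : EC U B)
    {M : ℝ} (hM : 0 < M) : 0 < Tmin U B y₀ M :=
  lt_of_lt_of_le (div_pos (norm_pos_iff.2 hy₀) hM) (Tmin_lb y₀ hU hB hEC hM)

lemma Tmin_good (hy₀ : y₀ ≠ 0) (hU : IsUnitaryGroup U) (hB : IsOrthProj B) (hEC : EC U B)
    (hET : ET U B) {M : ℝ} (hM : 0 < M) :
    ∃ u, GoodCtrl U B (Tmin U B y₀ M) M u y₀ 0 := by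
  obtain ⟨u, hmem, hst⟩ := hET y₀ hy₀ M hM
  obtain ⟨⟨hm, _⟩, haebd, _⟩ := hmem
  exact trunc hm (by filter_upwards [haebd] with t h ht; exact h ht.1) hM.le hst

lemma key_lemma (hU : IsUnitaryGroup U) (hB : IsOrthProj B) {C ε : ℝ}
    (hC : 0 < C) (hε : 0 < ε)
    (hec : ∀ y z : H, ∃ u, GoodCtrl U B ε (C * ‖z - U ε y‖) u y z)
    {s M M' : ℝ} (hM : 0 < M) (hM' : 0 < M') (hs : 0 < s)
    (hex : ∃ u, GoodCtrl U B s M' u y₀ 0)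
    (hcond : C * (|1 - M / M'| * ‖y₀‖) ≤ M) :
    Tmin U B y₀ M ≤ s + ε := by
  obtain ⟨u, hu⟩ := hex
  set c : ℝ := M / M' with hcdef
  have hc0 : 0 ≤ c := by positivity
  have hscale := good_scale hu hc0
  rw [show c * M' = M from div_mul_cancel₀ M hM'.ne'] at hscale
  set z : H := (1 - c) • U s y₀ with hzdef
  obtain ⟨w, hw⟩ := hec z 0
  have hbw : C * ‖(0 : H) - U ε z‖ ≤ M := by
    rw [zero_sub, norm_neg, hU.2.2.1, hzdef, norm_smul, Real.norm_eq_abs, hU.2.2.1]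
    exact hcond
  have hw' : GoodCtrl U B ε M w z 0 := hw.mono hbw
  have hcc := good_concat hU hB hs hε hscale hw'
  exact Tmin_le_of_good y₀ (by linarith) hcc

lemma Tmin_anti (hU : IsUnitaryGroup U) (hB : IsOrthProj B) (hEC : EC U B)
    {M₁ M₂ : ℝ} (h1 : 0 < M₁) (hle : M₁ ≤ M₂) :
    Tmin U B y₀ M₂ ≤ Tmin U B y₀ M₁ := by
  apply le_csInf (S_nonempty y₀ hU hB hEC h1)
  rintro s ⟨hspos, u, ⟨hml, haebd, hsex⟩, hst⟩
  apply csInf_le ⟨0, fun _ hx => hx.1.le⟩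
  exact ⟨hspos, u, ⟨hml, by filter_upwards [haebd] with t h ht; exact (h ht).trans hle,
    hsex⟩, hst⟩

end Aux

theorem minimal_time_map_properties
    (U : ℝ → H →L[ℂ] H) (B : H →L[ℂ] H) (hU : IsUnitaryGroup U) (hB : IsOrthProj B)
    (hEC : EC U B) (hECrev : EC (fun t => U (-t)) B)
    (hBB : BB U B) (hBBrev : BB (fun t => U (-t)) B)
    (hET : ET U B) (hETrev : ET (fun t => U (-t)) B)
    (y₀ : H) (hy₀ : y₀ ≠ 0) :
    StrictAntiOn (Tmin U B y₀) (Ioi (0 : ℝ)) ∧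
    ContinuousOn (Tmin U B y₀) (Ioi (0 : ℝ)) ∧
    (∀ M : ℝ, 0 < M → 0 < Tmin U B y₀ M) ∧
    Tendsto (Tmin U B y₀) (𝓝[>] (0 : ℝ)) atTop ∧
    Tendsto (Tmin U B y₀) atTop (𝓝 (0 : ℝ)) := by
  have hy0 : (0 : ℝ) < ‖y₀‖ := norm_pos_iff.2 hy₀
  refine ⟨?_, ?_, fun M hM => Tmin_pos y₀ hy₀ hU hB hEC hM, ?_, ?_⟩
  · -- strict antitonicity
    intro M₁ hM₁ M₂ hM₂ hlt
    have hM₁' : 0 < M₁ := hM₁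
    have hM₂' : 0 < M₂ := hM₂
    have hle : Tmin U B y₀ M₂ ≤ Tmin U B y₀ M₁ := Tmin_anti y₀ hU hB hEC hM₁' hlt.le
    rcases lt_or_eq_of_le hle with h | h
    · exact h
    exfalso
    obtain ⟨u, hmem, hst⟩ := hET y₀ hy₀ M₁ hM₁'
    obtain ⟨hml, haebd, hsex⟩ := hmem
    have hmem₂ : u ∈ UMset U B y₀ M₂ :=
      ⟨hml, by filter_upwards [haebd] with t ht h'; exact (ht h').trans hlt.le, hsex⟩
    have hst₂ : stateT U B (Tmin U B y₀ M₂) 0 u y₀ = 0 := by rw [h]; exact hst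
    have hae := hBB y₀ hy₀ M₂ hM₂' u hmem₂ hst₂
    have hTpos := Tmin_pos y₀ hy₀ hU hB hEC hM₂'
    have hnull : ∀ᵐ t : ℝ ∂volume, t ∉ Ioo 0 (Tmin U B y₀ M₂) := by
      filter_upwards [hae, haebd] with t h1 h2 ht
      have e1 := h1 ht
      have e2 := h2 (mem_Ioi.2 ht.1)
      rw [e1] at e2
      linarith
    have hvol : volume (Ioo 0 (Tmin U B y₀ M₂)) = 0 :=
      measure_eq_zero_iff_ae_notMem.2 hnull
    rw [Real.volume_Ioo] at hvol
    have := ENNReal.ofReal_eq_zero.1 hvol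
    linarith
  · -- continuity
    rw [Metric.continuousOn_iff]
    intro M₀ hM₀ ε hε
    have hM₀' : 0 < M₀ := hM₀
    obtain ⟨C, hC, hec⟩ := ec_good hEC (half_pos hε)
    refine ⟨min (M₀ / 2) (M₀ ^ 2 / (4 * C * ‖y₀‖)),
      lt_min (by positivity) (by positivity), fun M hM hdist => ?_⟩
    have hMpos : 0 < M := hM
    rw [Real.dist_eq] at hdist
    have hδ1 : |M - M₀| < M₀ / 2 := lt_of_lt_of_le hdist (min_le_left _ _)
    have hδ2 : |M - M₀| ≤ M₀ ^ 2 / (4 * C * ‖y₀‖) := le_trans hdist.le (min_le_right _ _)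
    have hM2 : M₀ / 2 ≤ M := by
      have h := abs_lt.1 hδ1
      linarith [h.1]
    have key1 : |M - M₀| * (4 * C * ‖y₀‖) ≤ M₀ ^ 2 := by
      rw [← le_div_iff₀ (by positivity)]
      exact hδ2
    have habs1 : |1 - M / M₀| = |M - M₀| / M₀ := by
      rw [show (1 : ℝ) - M / M₀ = (M₀ - M) / M₀ from by field_simp, abs_div,
        abs_of_pos hM₀', abs_sub_comm]
    have ha : C * (|1 - M / M₀| * ‖y₀‖) ≤ M := by
      rw [habs1]
      have h1 : C * (|M - M₀| / M₀ * ‖y₀‖) ≤ M₀ / 4 := by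
        rw [show C * (|M - M₀| / M₀ * ‖y₀‖) = (|M - M₀| * (C * ‖y₀‖)) / M₀ from by ring,
          div_le_div_iff₀ hM₀' (by norm_num : (0 : ℝ) < 4)]
        nlinarith [key1]
      linarith
    have habs2 : |1 - M₀ / M| = |M - M₀| / M := by
      rw [show (1 : ℝ) - M₀ / M = (M - M₀) / M from by field_simp, abs_div,
        abs_of_pos hMpos]
    have hb : C * (|1 - M₀ / M| * ‖y₀‖) ≤ M₀ := by
      rw [habs2]
      have h1 : |M - M₀| / M ≤ 2 * |M - M₀| / M₀ := by
        rw [div_le_div_iff₀ hMpos hM₀']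
        nlinarith [abs_nonneg (M - M₀)]
      calc C * (|M - M₀| / M * ‖y₀‖) ≤ C * (2 * |M - M₀| / M₀ * ‖y₀‖) :=
            mul_le_mul_of_nonneg_left (mul_le_mul_of_nonneg_right h1 (norm_nonneg _)) hC.le
      _ ≤ M₀ := by
            rw [show C * (2 * |M - M₀| / M₀ * ‖y₀‖)
                = (|M - M₀| * (4 * C * ‖y₀‖)) / (2 * M₀) from by ring,
              div_le_iff₀ (by positivity)]
            nlinarith [key1, sq_nonneg M₀]
    have hTgood₀ := Tmin_good y₀ hy₀ hU hB hEC hET hM₀'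
    have hTgoodM := Tmin_good y₀ hy₀ hU hB hEC hET hMpos
    have hTpos₀ := Tmin_pos y₀ hy₀ hU hB hEC hM₀'
    have hTposM := Tmin_pos y₀ hy₀ hU hB hEC hMpos
    have h1 : Tmin U B y₀ M ≤ Tmin U B y₀ M₀ + ε / 2 :=
      key_lemma y₀ hU hB hC (half_pos hε) hec hMpos hM₀' hTpos₀ hTgood₀ ha
    have h2 : Tmin U B y₀ M₀ ≤ Tmin U B y₀ M + ε / 2 :=
      key_lemma y₀ hU hB hC (half_pos hε) hec hM₀' hMpos hTposM hTgoodM hb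
    rw [Real.dist_eq, abs_lt]
    constructor <;> linarith
  · -- limit at 0⁺
    have h : Tendsto (fun M : ℝ => ‖y₀‖ / M) (𝓝[>] 0) atTop := by
      have h' : Tendsto (fun M : ℝ => ‖y₀‖ * M⁻¹) (𝓝[>] 0) atTop :=
        tendsto_inv_nhdsGT_zero.const_mul_atTop hy0
      simpa [div_eq_mul_inv] using h'
    refine Filter.tendsto_atTop_mono' (𝓝[>] (0:ℝ))
      (f₁ := fun M : ℝ => ‖y₀‖ / M) ?_ h
    filter_upwards [self_mem_nhdsWithin] with M hM
    exact Tmin_lb y₀ hU hB hEC hM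
  · -- limit at ∞
    rw [Metric.tendsto_atTop]
    intro ε hε
    obtain ⟨C, hC, hec⟩ := ec_good hEC (half_pos hε)
    refine ⟨max (C * ‖y₀‖) 1, fun M hM => ?_⟩
    have hMpos : 0 < M := lt_of_lt_of_le one_pos (le_trans (le_max_right _ _) hM)
    obtain ⟨u, hu⟩ := hec y₀ 0
    have hbw : C * ‖(0 : H) - U (ε / 2) y₀‖ ≤ M := by
      rw [zero_sub, norm_neg, hU.2.2.1]
      exact le_trans (le_max_left _ _) hM
    have hu' := hu.mono hbw
    have hTle : Tmin U B y₀ M ≤ ε / 2 := Tmin_le_of_good y₀ (half_pos hε) hu'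
    have hTpos : 0 < Tmin U B y₀ M := Tmin_pos y₀ hy₀ hU hB hEC hMpos
    rw [Real.dist_0_eq_abs, abs_of_pos hTpos]
    linarith
end
end
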